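/- Let G be a simple graph with spanning forest F. Then an adjacent pair (xy, yz) of edges of G at a vertex y is transitively covered if and only if x and z are biconnected in G. -/

import Mathlib

/-- Two vertices `a` and `b` of a simple graph `H` are *biconnected* in `H` if `a ≠ b` and
there exist two distinct paths from `a` to `b` in `H` whose only common vertices are
`a` and `b`. -/
def Biconnected {V : Type*} (H : SimpleGraph V) (a b : V) : Prop :=
  a ≠ b ∧ ∃ p q : H.Path a b, p ≠ q ∧
    ∀ x, x ∈ p.1.support → x ∈ q.1.support → (x = a ∨ x = b)

/-- An *adjacent pair* at a vertex `y`: a pair of distinct edges of `G` both incident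
to `y`. -/
def IsAdjPair {V : Type*} (G : SimpleGraph V) (y : V) (e₁ e₂ : Sym2 V) : Prop :=
  e₁ ≠ e₂ ∧ e₁ ∈ G.edgeSet ∧ e₂ ∈ G.edgeSet ∧ y ∈ e₁ ∧ y ∈ e₂

/-- A non-tree edge `f = pq` *covers* the pair `(e₁, e₂)` if both `e₁` and `e₂` are edges
of the fundamental cycle of `f`, i.e. each is `f` itself or an edge of the (unique, since
`F` is acyclic) `F`-path from `p` to `q`. -/
def Covers {V : Type*} (G F : SimpleGraph V) (f e₁ e₂ : Sym2 V) : Prop :=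
  ∃ (p q : V) (P : F.Path p q), f = s(p, q) ∧ G.Adj p q ∧ ¬ F.Adj p q ∧
    (e₁ = f ∨ e₁ ∈ P.1.edges) ∧ (e₂ = f ∨ e₂ ∈ P.1.edges)

/-- The relation *transitively covered* on adjacent pairs at `y`: the smallest symmetric
relation containing every adjacent pair at `y` covered by some non-tree edge, and closed
under transitivity through a common edge (for distinct extremes). -/
inductive TransCovered {V : Type*} (G F : SimpleGraph V) (y : V) :
    Sym2 V → Sym2 V → Prop
  | base {e₁ e₂ f : Sym2 V} :
      IsAdjPair G y e₁ e₂ → Covers G F f e₁ e₂ → TransCovered G F y e₁ e₂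
  | symm {e₁ e₂ : Sym2 V} : TransCovered G F y e₁ e₂ → TransCovered G F y e₂ e₁
  | trans {e₁ e₂ e₃ : Sym2 V} : TransCovered G F y e₁ e₂ → TransCovered G F y e₂ e₃ →
      e₁ ≠ e₃ → TransCovered G F y e₁ e₃


open SimpleGraph

namespace TCaux

variable {V : Type*} {G F : SimpleGraph V}

open Classical in
/-- Count of non-tree edges in a list. -/
noncomputable def ntc (F : SimpleGraph V) (l : List (Sym2 V)) : ℕ :=
  l.countP (fun e => decide (e ∉ F.edgeSet))

open Classical in
lemma ntc_nil : ntc F ([] : List (Sym2 V)) = 0 := rfl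

open Classical in
lemma ntc_cons (e : Sym2 V) (l : List (Sym2 V)) :
    ntc F (e :: l) = (if e ∈ F.edgeSet then 0 else 1) + ntc F l := by
  unfold ntc
  rw [List.countP_cons]
  by_cases h : e ∈ F.edgeSet <;> simp [h] <;> omega

open Classical in
lemma ntc_append (l₁ l₂ : List (Sym2 V)) :
    ntc F (l₁ ++ l₂) = ntc F l₁ + ntc F l₂ := by
  unfold ntc; rw [List.countP_append]

open Classical in
lemma ntc_reverse (l : List (Sym2 V)) : ntc F l.reverse = ntc F l :=
  (List.reverse_perm l).countP_eq _

lemma ntc_zero_of (l : List (Sym2 V)) (h : ∀ e ∈ l, e ∈ F.edgeSet) : ntc F l = 0 := by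
  induction l with
  | nil => rfl
  | cons e l ih =>
    rw [ntc_cons, if_pos (h e (List.mem_cons_self)), ih fun e' he' => h e' (List.mem_cons_of_mem _ he')]

lemma ntc_pos (l : List (Sym2 V)) {e : Sym2 V} (he : e ∈ l) (hn : e ∉ F.edgeSet) :
    1 ≤ ntc F l := by
  induction l with
  | nil => simp at he
  | cons e' l ih =>
    rw [ntc_cons]
    rcases List.mem_cons.mp he with rfl | he'
    · rw [if_neg hn]; omega
    · have := ih he'; omega

lemma sym2_ne {a c y : V} (hac : a ≠ c) (hay : a ≠ y) : s(a, y) ≠ s(c, y) := by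
  intro h
  rcases Sym2.eq_iff.mp h with ⟨h1, _⟩ | ⟨h1, _⟩
  · exact hac h1
  · exact hay h1

/-- In a path ending at `v`, any two edges containing `v` are equal. -/
lemma edge_unique_at_end {u v : V} (p : G.Walk u v) :
    p.IsPath → ∀ {e e' : Sym2 V}, e ∈ p.edges → e' ∈ p.edges → v ∈ e → v ∈ e' → e = e' := by
  induction p with
  | nil => intro _ e e' he; simp at he
  | @cons a c d h q ih =>
    intro hp e e' he he' hv hv'
    rw [Walk.edges_cons, List.mem_cons] at he he'
    have hq : q.IsPath := hp.of_cons
    have hu : a ∉ q.support := ((Walk.cons_isPath_iff h q).mp hp).2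
    have key : ∀ e₀ : Sym2 V, e₀ ∈ q.edges → d ∉ s(a, c) := by
      intro e₀ he₀ hd
      rcases Sym2.mem_iff.mp hd with h1 | h1
      · exact hu (h1 ▸ q.end_mem_support)
      · subst h1
        rw [Walk.isPath_iff_eq_nil.mp hq] at he₀
        simp at he₀
    rcases he with rfl | he
    · rcases he' with rfl | he'
      · rfl
      · exact absurd hv (key e' he')
    · rcases he' with rfl | he'
      · exact absurd hv' (key e he)
      · exact ih hq he he' hv hv'

lemma notMem_takeUntil [DecidableEq V] {u b y : V} (q : G.Walk u y) (hq : q.IsPath) (hb : b ∈ q.support)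
    (hby : b ≠ y) : y ∉ (q.takeUntil b hb).support := by
  intro hy
  have hnd : q.support.Nodup := hq.support_nodup
  rw [← q.take_spec hb, Walk.support_append] at hnd
  have hdis := List.disjoint_of_nodup_append hnd
  obtain ⟨c, h, d', hd⟩ := Walk.exists_eq_cons_of_ne hby (q.dropUntil b hb)
  have hy2 : y ∈ (q.dropUntil b hb).support.tail := by
    rw [hd, Walk.support_cons, List.tail_cons]
    exact d'.end_mem_support
  exact hdis hy hy2

/-- From a cycle based at `y` containing edges `s(a,y)` and `s(b,y)`, extract a path
from `a` to `b` avoiding `y`. -/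
lemma cycle_to_path [DecidableEq V] {y : V} (c : G.Walk y y) (hc : c.IsCycle) {a b : V}
    (h1 : s(a, y) ∈ c.edges) (h2 : s(b, y) ∈ c.edges) (hay : a ≠ y) (hby : b ≠ y)
    (hab : a ≠ b) : ∃ r : G.Walk a b, r.IsPath ∧ y ∉ r.support := by
  cases c with
  | nil => exact absurd rfl hc.ne_nil
  | @cons _ w _ h q =>
    have hq : q.IsPath := Walk.IsPath.mk' (by simpa using hc.support_nodup)
    rw [Walk.edges_cons, List.mem_cons] at h1 h2
    rcases h1 with h1h | h1t
    · have hwa : w = a := by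
        rcases Sym2.eq_iff.mp h1h with ⟨h', _⟩ | ⟨h', _⟩
        · exact absurd h' hay
        · exact h'.symm
      subst hwa
      rcases h2 with h2h | h2t
      · rcases Sym2.eq_iff.mp h2h with ⟨h', _⟩ | ⟨h', _⟩
        · exact absurd h' hby
        · exact absurd h' (Ne.symm hab)
      · have hbmem : b ∈ q.support := q.fst_mem_support_of_mem_edges h2t
        exact ⟨q.takeUntil b hbmem, hq.takeUntil hbmem, notMem_takeUntil q hq hbmem hby⟩
    · rcases h2 with h2h | h2t
      · have hwb : w = b := by
          rcases Sym2.eq_iff.mp h2h with ⟨h', _⟩ | ⟨h', _⟩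
          · exact absurd h' hby
          · exact h'.symm
        subst hwb
        have hamem : a ∈ q.support := q.fst_mem_support_of_mem_edges h1t
        refine ⟨(q.takeUntil a hamem).reverse, (hq.takeUntil hamem).reverse, ?_⟩
        rw [Walk.support_reverse, List.mem_reverse]
        exact notMem_takeUntil q hq hamem hay
      · exfalso
        have := edge_unique_at_end q hq h1t h2t (by simp) (by simp)
        rcases Sym2.eq_iff.mp this with ⟨h', _⟩ | ⟨h', _⟩
        · exact hab h'
        · exact hay h'

/-- From a path from `a` to `b` avoiding `y`, build a cycle based at `y`. -/
lemma path_to_cycle {y a b : V} (hya : G.Adj y a) (hby : G.Adj b y) (hab : a ≠ b)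
    (r : G.Walk a b) (hr : r.IsPath) (hy : y ∉ r.support) :
    ∃ c : G.Walk y y, c.IsCycle ∧ s(a, y) ∈ c.edges ∧ s(b, y) ∈ c.edges := by
  refine ⟨Walk.cons hya (r.concat hby), ?_, ?_, ?_⟩
  · rw [Walk.cons_isCycle_iff]
    constructor
    · apply Walk.IsPath.mk'
      rw [Walk.support_concat]
      rw [List.nodup_append]
      exact ⟨hr.support_nodup, List.nodup_singleton y, fun a ha b hb h => hy (by rw [List.mem_singleton] at hb; rw [← hb, ← h]; exact ha)⟩
    · rw [Walk.edges_concat, List.concat_eq_append]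
      intro hmem
      rcases List.mem_append.mp hmem with hm | hm
      · exact hy (r.fst_mem_support_of_mem_edges hm)
      · rcases Sym2.eq_iff.mp (List.mem_singleton.mp hm) with ⟨h', _⟩ | ⟨_, h'⟩
        · exact hby.ne h'.symm
        · exact hab h'
  · rw [Sym2.eq_swap]
    exact List.mem_cons_self
  · rw [Walk.edges_cons, Walk.edges_concat, List.concat_eq_append]
    exact List.mem_cons_of_mem _ (List.mem_append_right _ (List.mem_singleton_self _))


lemma bicon_of_path {x z y : V} (hxy : G.Adj x y) (hyz : G.Adj y z) (hxz : x ≠ z)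
    (r : G.Walk x z) (hr : r.IsPath) (hy : y ∉ r.support) : Biconnected G x z := by
  have hw2 : (Walk.cons hxy (Walk.cons hyz Walk.nil)).IsPath := by
    apply Walk.IsPath.mk'
    simp [hxy.ne, hyz.ne, hxz]
  refine ⟨hxz, ⟨r, hr⟩, ⟨_, hw2⟩, ?_, ?_⟩
  · intro hEq
    apply hy
    have hco : r = Walk.cons hxy (Walk.cons hyz Walk.nil) := congrArg Subtype.val hEq
    rw [hco]
    simp
  · intro v hv1 hv2
    simp only [Walk.support_cons, Walk.support_nil, List.mem_cons, List.mem_singleton] at hv2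
    rcases hv2 with rfl | rfl | hv2
    · exact Or.inl rfl
    · exact absurd hv1 hy
    · simp at hv2
      exact Or.inr hv2

lemma forward_aux (hFG : F ≤ G) {y : V} {e₁ e₂ : Sym2 V}
    (h : TransCovered G F y e₁ e₂) :
    y ∈ e₁ ∧ y ∈ e₂ ∧ e₁ ≠ e₂ ∧ e₁ ∈ G.edgeSet ∧ e₂ ∈ G.edgeSet ∧
      ∃ c : G.Walk y y, c.IsCycle ∧ e₁ ∈ c.edges ∧ e₂ ∈ c.edges := by
  classical
  induction h with
  | @base e₁ e₂ f hpair hcov =>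
    obtain ⟨hne, hE1, hE2, hy1, hy2⟩ := hpair
    obtain ⟨p, q, P, hf, hGpq, hnF, hc1, hc2⟩ := hcov
    have hsub : ∀ e ∈ P.1.edges, e ∈ G.edgeSet := fun e he =>
      edgeSet_mono hFG (P.1.edges_subset_edgeSet he)
    set D : G.Walk q q := Walk.cons hGpq.symm (P.1.transfer G hsub) with hD
    have hDe : D.edges = s(q, p) :: P.1.edges := by
      rw [hD, Walk.edges_cons, Walk.edges_transfer]
    have hDc : D.IsCycle := by
      rw [hD, Walk.cons_isCycle_iff]
      constructor
      · exact Walk.IsPath.mk' (by rw [Walk.support_transfer]; exact P.2.support_nodup)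
      · rw [Walk.edges_transfer]
        intro hm
        exact hnF (F.mem_edgeSet.mp (P.1.edges_subset_edgeSet hm)).symm
    have hm1 : e₁ ∈ D.edges := by
      rw [hDe]
      rcases hc1 with h | h
      · rw [h, hf, Sym2.eq_swap]; exact List.mem_cons_self
      · exact List.mem_cons_of_mem _ h
    have hm2 : e₂ ∈ D.edges := by
      rw [hDe]
      rcases hc2 with h | h
      · rw [h, hf, Sym2.eq_swap]; exact List.mem_cons_self
      · exact List.mem_cons_of_mem _ h
    have hyD : y ∈ D.support := by
      obtain ⟨w, hw⟩ := Sym2.mem_iff_exists.mp hy1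
      rw [hw] at hm1
      exact D.fst_mem_support_of_mem_edges hm1
    refine ⟨hy1, hy2, hne, hE1, hE2, D.rotate y hyD, hDc.rotate hyD, ?_, ?_⟩
    · exact ((D.rotate_edges y hyD).perm.mem_iff).mpr hm1
    · exact ((D.rotate_edges y hyD).perm.mem_iff).mpr hm2
  | symm h ih =>
    obtain ⟨a1, a2, a3, a4, a5, c, hc, m1, m2⟩ := ih
    exact ⟨a2, a1, a3.symm, a5, a4, c, hc, m2, m1⟩
  | @trans e₁ e₂ e₃ h1 h2 hne13 ih1 ih2 =>
    obtain ⟨hy1, hy2, hne12, hE1, hE2, c₁, hc₁, m11, m12⟩ := ih1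
    obtain ⟨_, hy3, hne23, _, hE3, c₂, hc₂, m21, m22⟩ := ih2
    obtain ⟨v₁, rfl⟩ := Sym2.mem_iff_exists.mp hy1
    obtain ⟨v₂, rfl⟩ := Sym2.mem_iff_exists.mp hy2
    obtain ⟨v₃, rfl⟩ := Sym2.mem_iff_exists.mp hy3
    have ha1 : G.Adj y v₁ := G.mem_edgeSet.mp hE1
    have ha2 : G.Adj y v₂ := G.mem_edgeSet.mp hE2
    have ha3 : G.Adj y v₃ := G.mem_edgeSet.mp hE3
    have hv12 : v₁ ≠ v₂ := fun h => hne12 (by rw [h])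
    have hv23 : v₂ ≠ v₃ := fun h => hne23 (by rw [h])
    have hv13 : v₁ ≠ v₃ := fun h => hne13 (by rw [h])
    obtain ⟨r₁, hr₁, hyr₁⟩ := cycle_to_path c₁ hc₁ (a := v₁) (b := v₂)
      (by rwa [Sym2.eq_swap] at m11) (by rwa [Sym2.eq_swap] at m12) ha1.ne' ha2.ne' hv12
    obtain ⟨r₂, hr₂, hyr₂⟩ := cycle_to_path c₂ hc₂ (a := v₂) (b := v₃)
      (by rwa [Sym2.eq_swap] at m21) (by rwa [Sym2.eq_swap] at m22) ha2.ne' ha3.ne' hv23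
    set r : G.Walk v₁ v₃ := (r₁.append r₂).bypass with hrdef
    have hyr : y ∉ r.support := by
      intro hmem
      have := Walk.support_bypass_subset _ hmem
      rcases (Walk.mem_support_append_iff _ _).mp this with h | h
      · exact hyr₁ h
      · exact hyr₂ h
    obtain ⟨c, hc, mc1, mc3⟩ := path_to_cycle ha1 ha3.symm hv13 r
      (Walk.bypass_isPath _) hyr
    exact ⟨hy1, hy3, hne13, hE1, hE3, c, hc,
      by rwa [Sym2.eq_swap] at mc1, by rwa [Sym2.eq_swap] at mc3⟩


lemma Tp_trans {y u v w : V} (huy : u ≠ y) (hwy : w ≠ y) :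
    (u = v ∨ TransCovered G F y s(u, y) s(v, y)) →
    (v = w ∨ TransCovered G F y s(v, y) s(w, y)) →
    (u = w ∨ TransCovered G F y s(u, y) s(w, y)) := by
  rintro (rfl | h1) h2
  · exact h2
  rcases h2 with rfl | h2
  · exact Or.inr h1
  by_cases huw : u = w
  · exact Or.inl huw
  · exact Or.inr (TransCovered.trans h1 h2 (sym2_ne huw huy))

lemma exists_decomp {a b : V} (W : G.Walk a b) :
    (∃ f ∈ W.edges, f ∉ F.edgeSet) →
    ∃ (p q : V) (hpq : G.Adj p q) (W₁ : G.Walk a p) (W₂ : G.Walk q b),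
      W = W₁.append (Walk.cons hpq W₂) ∧ s(p, q) ∉ F.edgeSet := by
  induction W with
  | nil => intro h; simp at h
  | @cons a c b hadj W' ih =>
    intro h
    by_cases hF : s(a, c) ∈ F.edgeSet
    · have h' : ∃ f ∈ W'.edges, f ∉ F.edgeSet := by
        obtain ⟨f, hf, hfn⟩ := h
        rw [Walk.edges_cons, List.mem_cons] at hf
        rcases hf with rfl | hf
        · exact absurd hF hfn
        · exact ⟨f, hf, hfn⟩
      obtain ⟨p, q, hpq, W₁, W₂, heq, hn⟩ := ih h'
      exact ⟨p, q, hpq, Walk.cons hadj W₁, W₂, by rw [Walk.cons_append, ← heq], hn⟩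
    · exact ⟨a, c, hadj, Walk.nil, W', by rw [Walk.nil_append], hF⟩

/-- The key step when the left end edge of the cycle is a non-tree edge. -/
lemma step1 [DecidableEq V] (hFG : F ≤ G)
    (hspan : ∀ a b : V, F.Reachable a b ↔ G.Reachable a b) {y : V} {k : ℕ}
    (IH : ∀ (a b : V), G.Adj a y → G.Adj b y → ∀ W : G.Walk a b, y ∉ W.support →
      ntc F (s(y, a) :: W.edges ++ [s(b, y)]) ≤ k →
      a = b ∨ TransCovered G F y s(a, y) s(b, y))
    {a b : V} (hay : G.Adj a y) (hby : G.Adj b y) (hab : a ≠ b)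
    (W : G.Walk a b) (hyW : y ∉ W.support)
    (hE1 : s(y, a) ∉ F.edgeSet)
    (hcnt : ntc F (W.edges ++ [s(b, y)]) ≤ k) :
    TransCovered G F y s(a, y) s(b, y) := by
  obtain ⟨w0⟩ := (hspan a y).mpr hay.reachable
  obtain ⟨P0⟩ : Nonempty (F.Path a y) := ⟨w0.toPath⟩
  obtain ⟨c, hyc, R0, hRdec⟩ := Walk.exists_eq_cons_of_ne hay.ne' P0.1.reverse
  have hRpath : (Walk.cons hyc R0).IsPath := by rw [← hRdec]; exact P0.2.reverse
  have hR0path : R0.IsPath := hRpath.of_cons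
  have hyR0 : y ∉ R0.support := ((Walk.cons_isPath_iff _ _).mp hRpath).2
  have hcy : c ≠ y := hyc.ne'
  have hca : c ≠ a := fun h => hE1 (F.mem_edgeSet.mpr (h ▸ hyc))
  have hGcy : G.Adj c y := (hFG hyc).symm
  have hcyP : s(c, y) ∈ P0.1.edges := by
    have hm : s(y, c) ∈ P0.1.reverse.edges := by
      rw [hRdec, Walk.edges_cons]; exact List.mem_cons_self
    rw [Walk.edges_reverse, List.mem_reverse] at hm
    rwa [Sym2.eq_swap] at hm
  have hTac : TransCovered G F y s(a, y) s(c, y) := by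
    apply TransCovered.base (f := s(a, y))
    · exact ⟨sym2_ne (Ne.symm hca) hay.ne, G.mem_edgeSet.mpr hay,
        G.mem_edgeSet.mpr hGcy, Sym2.mem_mk_right _ _, Sym2.mem_mk_right _ _⟩
    · refine ⟨a, y, P0, rfl, hay, ?_, Or.inl rfl, Or.inr hcyP⟩
      exact fun hF => hE1 (F.mem_edgeSet.mpr hF.symm)
  have hsubR : ∀ e ∈ R0.edges, e ∈ G.edgeSet := fun e he =>
    edgeSet_mono hFG (R0.edges_subset_edgeSet he)
  set S : G.Walk c b := (R0.transfer G hsubR).append W with hS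
  have hyS : y ∉ S.support := by
    intro hm
    rcases (Walk.mem_support_append_iff _ _).mp hm with hm | hm
    · rw [Walk.support_transfer] at hm; exact hyR0 hm
    · exact hyW hm
  have hScnt : ntc F (s(y, c) :: S.edges ++ [s(b, y)]) ≤ k := by
    have he : S.edges = R0.edges ++ W.edges := by
      rw [hS, Walk.edges_append, Walk.edges_transfer]
    rw [List.cons_append, ntc_cons, if_pos (F.mem_edgeSet.mpr hyc), he, List.append_assoc,
      ntc_append, ntc_zero_of R0.edges (fun e he' => R0.edges_subset_edgeSet he')]
    omega
  rcases IH c b hGcy hby S hyS hScnt with rfl | hTcb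
  · exact hTac
  · exact TransCovered.trans hTac hTcb (sym2_ne hab hay.ne)

lemma main_lemma [DecidableEq V] (hFG : F ≤ G) (hacyc : F.IsAcyclic)
    (hspan : ∀ a b : V, F.Reachable a b ↔ G.Reachable a b) {y : V} :
    ∀ k (a b : V), G.Adj a y → G.Adj b y → ∀ W : G.Walk a b, y ∉ W.support →
      ntc F (s(y, a) :: W.edges ++ [s(b, y)]) ≤ k →
      a = b ∨ TransCovered G F y s(a, y) s(b, y) := by
  intro k
  induction k using Nat.strong_induction_on with
  | _ k IH =>
  intro a b hay hby W hyW hcnt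
  by_cases hab : a = b
  · exact Or.inl hab
  right
  by_cases hE1 : s(y, a) ∈ F.edgeSet
  swap
  · -- Case 1 : the left end edge is non-tree
    have hk : 1 ≤ k := le_trans (ntc_pos _ (by simp) hE1) hcnt
    have hcnt' : ntc F (W.edges ++ [s(b, y)]) ≤ k - 1 := by
      rw [List.cons_append, ntc_cons, if_neg hE1] at hcnt
      omega
    exact step1 hFG hspan (IH (k - 1) (by omega)) hay hby hab W hyW hE1 hcnt'
  by_cases hE2 : s(b, y) ∈ F.edgeSet
  swap
  · -- Case 2 : the right end edge is non-tree; symmetric via reversal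
    have hE2' : s(y, b) ∉ F.edgeSet := by rwa [Sym2.eq_swap]
    have hE1' : s(a, y) ∈ F.edgeSet := by rwa [Sym2.eq_swap]
    have hk : 1 ≤ k := le_trans (ntc_pos _ (by simp) hE2) hcnt
    have hcnt' : ntc F (W.reverse.edges ++ [s(a, y)]) ≤ k - 1 := by
      rw [List.cons_append, ntc_cons, if_pos hE1, ntc_append, ntc_cons, ntc_nil,
        if_neg hE2] at hcnt
      rw [Walk.edges_reverse, ntc_append, ntc_reverse, ntc_cons, ntc_nil, if_pos hE1']
      omega
    have hyW' : y ∉ W.reverse.support := by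
      rw [Walk.support_reverse, List.mem_reverse]; exact hyW
    exact (step1 hFG hspan (IH (k - 1) (by omega)) hby hay (Ne.symm hab)
      W.reverse hyW' hE2' hcnt').symm
  by_cases hW0 : ∀ e ∈ W.edges, e ∈ F.edgeSet
  · -- all edges are tree edges: contradiction with acyclicity
    exfalso
    set W' := W.transfer F hW0 with hW'
    have hFay : F.Adj a y := (F.mem_edgeSet.mp hE1).symm
    have hFyb : F.Adj y b := (F.mem_edgeSet.mp hE2).symm
    have p2path : (Walk.cons hFay (Walk.cons hFyb Walk.nil)).IsPath := by
      apply Walk.IsPath.mk'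
      simp [hay.ne, hby.ne', hab]
    have huniq := hacyc.path_unique W'.toPath ⟨_, p2path⟩
    have hyP : y ∈ (W'.toPath : F.Walk a b).support := by
      rw [huniq]; simp
    have : y ∈ W.support := by
      have h2 := Walk.support_bypass_subset W' hyP
      rwa [Walk.support_transfer] at h2
    exact hyW this
  · -- Case 3 : a non-tree edge strictly inside W
    push_neg at hW0
    obtain ⟨p, q, hpq, W₁, W₂, rfl, hfn⟩ := exists_decomp W hW0
    have hyW₁ : y ∉ W₁.support := fun h =>
      hyW ((Walk.mem_support_append_iff _ _).mpr (Or.inl h))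
    have hyW₂ : y ∉ W₂.support := fun h =>
      hyW ((Walk.mem_support_append_iff _ _).mpr (Or.inr (by
        rw [Walk.support_cons]; exact List.mem_cons_of_mem _ h)))
    have hpy : p ≠ y := by
      rintro rfl
      exact hyW ((Walk.mem_support_append_iff _ _).mpr (Or.inl W₁.end_mem_support))
    have hqy : q ≠ y := by
      rintro rfl
      exact hyW₂ W₂.start_mem_support
    obtain ⟨w0⟩ := (hspan p q).mpr hpq.reachable
    obtain ⟨P⟩ : Nonempty (F.Path p q) := ⟨w0.toPath⟩
    have hnFpq : ¬ F.Adj p q := fun h => hfn (F.mem_edgeSet.mpr h)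
    have hcnt' : ntc F W₁.edges + 1 + ntc F W₂.edges ≤ k := by
      rw [List.cons_append, ntc_cons, if_pos hE1, Walk.edges_append, Walk.edges_cons,
        List.append_assoc, ntc_append, List.cons_append, ntc_cons, if_neg hfn,
        ntc_append, ntc_cons, if_pos hE2, ntc_nil] at hcnt
      omega
    have hk : 1 ≤ k := by omega
    by_cases hyP : y ∈ P.1.support
    · -- 3b : the fundamental path passes through y
      have htpath : (P.1.takeUntil y hyP).IsPath := P.2.takeUntil hyP
      have hdpath : (P.1.dropUntil y hyP).IsPath := P.2.dropUntil hyP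
      obtain ⟨c, hyc, R, hRdec⟩ :=
        Walk.exists_eq_cons_of_ne (Ne.symm hpy) (P.1.takeUntil y hyP).reverse
      obtain ⟨d, hyd, R₂, hDdec⟩ :=
        Walk.exists_eq_cons_of_ne (Ne.symm hqy) (P.1.dropUntil y hyP)
      have hRpath : (Walk.cons hyc R).IsPath := by rw [← hRdec]; exact htpath.reverse
      have hyR : y ∉ R.support := ((Walk.cons_isPath_iff _ _).mp hRpath).2
      have hR2full : (Walk.cons hyd R₂).IsPath := by rw [← hDdec]; exact hdpath
      have hyR₂ : y ∉ R₂.support := ((Walk.cons_isPath_iff _ _).mp hR2full).2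
      have hcy : c ≠ y := hyc.ne'
      have hdy : d ≠ y := hyd.ne'
      have hGcy : G.Adj c y := (hFG hyc).symm
      have hGdy : G.Adj d y := (hFG hyd).symm
      have hcP : s(c, y) ∈ P.1.edges := by
        have hm : s(y, c) ∈ (P.1.takeUntil y hyP).reverse.edges := by
          rw [hRdec, Walk.edges_cons]; exact List.mem_cons_self
        rw [Walk.edges_reverse, List.mem_reverse] at hm
        have := P.1.edges_takeUntil_subset hyP hm
        rwa [Sym2.eq_swap] at this
      have hdP : s(d, y) ∈ P.1.edges := by
        have hm : s(y, d) ∈ (P.1.dropUntil y hyP).edges := by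
          rw [hDdec, Walk.edges_cons]; exact List.mem_cons_self
        have := P.1.edges_dropUntil_subset hyP hm
        rwa [Sym2.eq_swap] at this
      have hcd : c ≠ d := by
        intro hcontra
        have hnd : P.1.support.Nodup := P.2.support_nodup
        rw [← P.1.take_spec hyP, Walk.support_append] at hnd
        have hdis := List.disjoint_of_nodup_append hnd
        have hcmem : c ∈ (P.1.takeUntil y hyP).support := by
          have hm : c ∈ (P.1.takeUntil y hyP).reverse.support := by
            rw [hRdec, Walk.support_cons]
            exact List.mem_cons_of_mem _ R.start_mem_support
          rwa [Walk.support_reverse, List.mem_reverse] at hm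
        have hdmem : d ∈ (P.1.dropUntil y hyP).support.tail := by
          rw [hDdec, Walk.support_cons, List.tail_cons]
          exact R₂.start_mem_support
        exact hdis hcmem (hcontra ▸ hdmem)
      have hTcd : TransCovered G F y s(c, y) s(d, y) := by
        apply TransCovered.base (f := s(p, q))
        · exact ⟨sym2_ne hcd hcy, G.mem_edgeSet.mpr hGcy, G.mem_edgeSet.mpr hGdy,
            Sym2.mem_mk_right _ _, Sym2.mem_mk_right _ _⟩
        · exact ⟨p, q, P, rfl, hpq, hnFpq, Or.inr hcP, Or.inr hdP⟩
      -- first segment : from a to c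
      have hsubR : ∀ e ∈ R.reverse.edges, e ∈ G.edgeSet := fun e he =>
        edgeSet_mono hFG (R.reverse.edges_subset_edgeSet he)
      set S₁ : G.Walk a c := W₁.append (R.reverse.transfer G hsubR) with hS₁
      have hyS₁ : y ∉ S₁.support := by
        intro hm
        rcases (Walk.mem_support_append_iff _ _).mp hm with hm | hm
        · exact hyW₁ hm
        · rw [Walk.support_transfer, Walk.support_reverse, List.mem_reverse] at hm
          exact hyR hm
      have hS₁cnt : ntc F (s(y, a) :: S₁.edges ++ [s(c, y)]) ≤ k - 1 := by
        rw [List.cons_append, ntc_cons, if_pos hE1, hS₁, Walk.edges_append,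
          Walk.edges_transfer, List.append_assoc, ntc_append, ntc_append,
          ntc_zero_of _ (fun e he' => R.reverse.edges_subset_edgeSet he'),
          ntc_zero_of [s(c, y)] (by simpa using F.mem_edgeSet.mpr hyc.symm)]
        omega
      have hT1 := IH (k - 1) (by omega) a c hay hGcy S₁ hyS₁ hS₁cnt
      -- second segment : from d to b
      have hsubR₂ : ∀ e ∈ R₂.edges, e ∈ G.edgeSet := fun e he =>
        edgeSet_mono hFG (R₂.edges_subset_edgeSet he)
      set S₂ : G.Walk d b := (R₂.transfer G hsubR₂).append W₂ with hS₂
      have hyS₂ : y ∉ S₂.support := by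
        intro hm
        rcases (Walk.mem_support_append_iff _ _).mp hm with hm | hm
        · rw [Walk.support_transfer] at hm; exact hyR₂ hm
        · exact hyW₂ hm
      have hS₂cnt : ntc F (s(y, d) :: S₂.edges ++ [s(b, y)]) ≤ k - 1 := by
        rw [List.cons_append, ntc_cons,
          if_pos (by simpa using F.mem_edgeSet.mpr hyd : s(y, d) ∈ F.edgeSet), hS₂,
          Walk.edges_append, Walk.edges_transfer, ntc_append, ntc_append,
          ntc_zero_of _ (fun e he' => R₂.edges_subset_edgeSet he'),
          ntc_cons, if_pos hE2, ntc_nil]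
        omega
      have hT2 := IH (k - 1) (by omega) d b hGdy hby S₂ hyS₂ hS₂cnt
      have hchain := Tp_trans hay.ne hby.ne
        (Tp_trans hay.ne hdy hT1 (Or.inr hTcd)) hT2
      rcases hchain with h | h
      · exact absurd h hab
      · exact h
    · -- 3a : the fundamental path avoids y
      have hsubP : ∀ e ∈ P.1.edges, e ∈ G.edgeSet := fun e he =>
        edgeSet_mono hFG (P.1.edges_subset_edgeSet he)
      set S : G.Walk a b := W₁.append ((P.1.transfer G hsubP).append W₂) with hS
      have hyS : y ∉ S.support := by
        intro hm
        rcases (Walk.mem_support_append_iff _ _).mp hm with hm | hm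
        · exact hyW₁ hm
        · rcases (Walk.mem_support_append_iff _ _).mp hm with hm | hm
          · rw [Walk.support_transfer] at hm; exact hyP hm
          · exact hyW₂ hm
      have hScnt : ntc F (s(y, a) :: S.edges ++ [s(b, y)]) ≤ k - 1 := by
        rw [List.cons_append, ntc_cons, if_pos hE1, hS, Walk.edges_append,
          Walk.edges_append, Walk.edges_transfer, List.append_assoc, ntc_append,
          ntc_append, ntc_append, ntc_zero_of _ (fun e he' => P.1.edges_subset_edgeSet he'),
          ntc_cons, if_pos hE2, ntc_nil]
        omega
      rcases IH (k - 1) (by omega) a b hay hby S hyS hScnt with h | h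
      · exact absurd h hab
      · exact h

end TCaux

/-- Let `G` be a simple graph with spanning forest `F`. Then an adjacent pair
`(xy, yz)` of edges of `G` at a vertex `y` is transitively covered if and only if
`x` and `z` are biconnected in `G`. -/
theorem transCovered_iff_biconnected {V : Type*} (G F : SimpleGraph V)
    (hFG : F ≤ G) (hacyc : F.IsAcyclic)
    (hspan : ∀ a b : V, F.Reachable a b ↔ G.Reachable a b)
    (x y z : V) (hxy : G.Adj x y) (hyz : G.Adj y z)
    (hne : s(x, y) ≠ s(y, z)) :
    TransCovered G F y s(x, y) s(y, z) ↔ Biconnected G x z := by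
  classical
  have hxz : x ≠ z := fun h => hne (by rw [h, Sym2.eq_swap])
  constructor
  · intro h
    obtain ⟨hy1, hy2, hne', hE1, hE2, c, hc, hm1, hm2⟩ := TCaux.forward_aux hFG h
    have hm2' : s(z, y) ∈ c.edges := by rwa [Sym2.eq_swap] at hm2
    obtain ⟨r, hr, hyr⟩ := TCaux.cycle_to_path c hc hm1 hm2' hxy.ne hyz.ne' hxz
    exact TCaux.bicon_of_path hxy hyz hxz r hr hyr
  · rintro ⟨hxz', p, q, hpq, hcom⟩
    have hex : ∃ r : G.Walk x z, r.IsPath ∧ y ∉ r.support := by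
      by_cases hy : y ∈ p.1.support
      · refine ⟨q.1, q.2, fun hy' => ?_⟩
        rcases hcom y hy hy' with h | h
        · exact hxy.ne' h
        · exact hyz.ne h
      · exact ⟨p.1, p.2, hy⟩
    obtain ⟨r, hr, hyr⟩ := hex
    rcases TCaux.main_lemma hFG hacyc hspan (TCaux.ntc F (s(y, x) :: r.edges ++ [s(z, y)]))
      x z hxy hyz.symm r hyr le_rfl with h | h
    · exact absurd h hxz
    · have hzy : s(z, y) = s(y, z) := Sym2.eq_swap
      rwa [hzy] at h
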